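/- Let n ≥ 1, m ≥ 1, let 𝔞 ∈ A_n(m) be an initial element, and let 𝔟 be the terminal element of the transversal chain T_0(𝔞). Then τ(T_0(𝔞)) = T_0(τ𝔟) as subsets of A_n(m) (note that τ𝔟 is an initial element). -/

import Mathlib

/- Common definitions following K. O'Hara's spread/degree and the signature
   refinement; elements of A_n(m) are lists of naturals of length n+1 and sum m. -/

namespace OHara

/-- The spread of `a = (a_0, …, a_n)`: the maximum of `a_i + a_{i+1}` over `0 ≤ i ≤ n-1`
(`0` if the list has length ≤ 1). -/
def sprL (a : List ℕ) : ℕ :=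
  (Finset.range (a.length - 1)).sup (fun i => a.getD i 0 + a.getD (i + 1) 0)

/-- `M(a)`: the set of left indices of maximal pairs. -/
def Mset (a : List ℕ) : Finset ℕ :=
  (Finset.range (a.length - 1)).filter (fun i => a.getD i 0 + a.getD (i + 1) 0 = sprL a)

/-- The connected component (maximal interval of consecutive integers) of `i` inside `S`. -/
def compF (S : Finset ℕ) (i : ℕ) : Finset ℕ :=
  S.filter (fun j => Finset.Icc (min i j) (max i j) ⊆ S)

/-- The left endpoints of the maximal intervals of consecutive integers of `S`. -/
def leftEnds (S : Finset ℕ) : Finset ℕ :=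
  S.filter (fun i => i = 0 ∨ (i - 1) ∉ S)

/-- O'Hara's degree: the sum over the maximal intervals `D` of `M(a)` of `⌈|D|/2⌉`. -/
def ecdL (a : List ℕ) : ℕ :=
  ∑ i ∈ leftEnds (Mset a), ((compF (Mset a) i).card + 1) / 2

/-- The set of active indices `Act(a) = M(a) ∪ (1 + M(a))`. -/
def ActF (a : List ℕ) : Finset ℕ :=
  Mset a ∪ (Mset a).image (· + 1)

/-- An index `j` survives in `ω(a)` iff it is not active, or it is the left endpoint `c` of a
maximal interval `D = [c, c+d]` of `M(a)` with `d` odd (i.e. `|D|` even). -/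
def survivesB (a : List ℕ) (j : ℕ) : Bool :=
  decide (j ∉ ActF a ∨ (j ∈ leftEnds (Mset a) ∧ Even (compF (Mset a) j).card))

/-- `ω(a)`: the result of removing from `a` the largest possible number of maximal pairs. -/
def omegaL (a : List ℕ) : List ℕ :=
  ((List.range a.length).filter (fun j => survivesB a j)).map (fun j => a.getD j 0)

/-- Fuel-driven recursion computing the signature (the fuel `a.length` in `sigmaL`
always suffices, since `ω` shortens a list of length ≥ 3 by at least 2). -/
def sigmaAux : ℕ → List ℕ → List ℕ
  | _, [] => []
  | 0, a => [a.sum]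
  | fuel + 1, a =>
    if a.length ≤ 2 then [a.sum]
    else List.replicate (ecdL a - 1) 0 ++ [sprL a - sprL (omegaL a)] ++ sigmaAux fuel (omegaL a)

/-- The signature `σ(a)`. -/
def sigmaL (a : List ℕ) : List ℕ := sigmaAux a.length a

/-- `m = Σ_{j=0}^k (j+1)·d_j` determined by a signature `(d_0, …, d_k)`. -/
def mOf (ds : List ℕ) : ℕ := ∑ j ∈ Finset.range ds.length, (j + 1) * ds.getD j 0

/-- `Q_n(d_0, …, d_k)`: the set of elements of `A_n(m)` of signature `(d_0, …, d_k)`. -/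
def Qset (n : ℕ) (ds : List ℕ) : Set (List ℕ) :=
  {a | a.length = n + 1 ∧ a.sum = mOf ds ∧ sigmaL a = ds}

/-- The rank `rk(a) = Σ i·a_i`. -/
def rkL (a : List ℕ) : ℕ := ∑ i ∈ Finset.range a.length, i * a.getD i 0

/-- `b` covers `a` in `A_n(m)`: `b` is obtained from `a` by replacing some consecutive pair
`(a_i, a_{i+1})` by `(a_i - 1, a_{i+1} + 1)`. -/
def coversL (b a : List ℕ) : Prop :=
  ∃ i, i + 1 < a.length ∧ 0 < a.getD i 0 ∧
    b = (a.set i (a.getD i 0 - 1)).set (i + 1) (a.getD (i + 1) 0 + 1)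

/-- Normalization phase of the raising algorithm: starting at index `i ∈ M(a)`, repeatedly
replace `i` by `i - 1` as long as `i ≥ 1` and `a_{i+1} = a_{i-1}`. -/
def rnormIdx (a : List ℕ) : ℕ → ℕ
  | 0 => 0
  | i + 1 => if a.getD (i + 2) 0 = a.getD i 0 then rnormIdx a i else i + 1

/-- One move of the raising algorithm from `(a, i)` with `i ∈ M(a)`: after normalizing the
index, either halt (`none`, at an initial element) or perform one step. -/
def raiseMove (a : List ℕ) (i : ℕ) : Option (List ℕ × ℕ) :=
  let j := rnormIdx a i
  if a.getD (j + 1) 0 = 0 then none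
  else some ((a.set j (a.getD j 0 + 1)).set (j + 1) (a.getD (j + 1) 0 - 1), j)

/-- The list of elements produced by iterating the raising algorithm (including the start). -/
def raiseList : ℕ → List ℕ → ℕ → List (List ℕ)
  | 0, a, _ => [a]
  | fuel + 1, a, i =>
    match raiseMove a i with
    | none => [a]
    | some (a', j) => a :: raiseList fuel a' j

/-- Normalization phase of the lowering algorithm: starting at index `i ∈ M(a)`, repeatedly
replace `i` by `i + 1` as long as `i ≤ n - 2` and `a_i = a_{i+2}` (fuel-driven). -/
def lnormIdx (a : List ℕ) : ℕ → ℕ → ℕ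
  | 0, i => i
  | fuel + 1, i =>
    if i + 2 < a.length ∧ a.getD i 0 = a.getD (i + 2) 0 then lnormIdx a fuel (i + 1) else i

/-- One move of the lowering algorithm from `(a, i)` with `i ∈ M(a)`: after normalizing the
index, either halt (`none`, at a terminal element) or perform one step. -/
def lowerMove (a : List ℕ) (i : ℕ) : Option (List ℕ × ℕ) :=
  let j := lnormIdx a a.length i
  if a.getD j 0 = 0 then none
  else some ((a.set j (a.getD j 0 - 1)).set (j + 1) (a.getD (j + 1) 0 + 1), j)

/-- The list of elements produced by iterating the lowering algorithm (including the start). -/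
def lowerList : ℕ → List ℕ → ℕ → List (List ℕ)
  | 0, a, _ => [a]
  | fuel + 1, a, i =>
    match lowerMove a i with
    | none => [a]
    | some (a', j) => a :: lowerList fuel a' j

/-- The colors of the successive covering relations produced by the lowering algorithm:
a lowering step at index `j` replaces `(a_j, a_{j+1})` by `(a_j - 1, a_{j+1} + 1)` and has
color `j + 1`. -/
def lowerColors : ℕ → List ℕ → ℕ → List ℕ
  | 0, _, _ => []
  | fuel + 1, a, i =>
    match lowerMove a i with
    | none => []
    | some (a', j) => (j + 1) :: lowerColors fuel a' j

/-- The transversal chain `T_i(a)`: the elements obtained from `a` by the raising algorithm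
together with those obtained by the lowering algorithm, both started at index `i ∈ M(a)`.
(The fuels `rk(a)` and `a.length * a.sum` are always sufficient, since each raising move
decreases the rank by 1 and each lowering move increases it by 1, within `[0, n·m]`.) -/
def Tset (a : List ℕ) (i : ℕ) : Set (List ℕ) :=
  {x | x ∈ raiseList (rkL a) a i ∨ x ∈ lowerList (a.length * a.sum) a i}

end OHara

namespace OHaraAux
open OHara

/-! ### getD basics -/

lemma getD_set_self {c : List ℕ} {i : ℕ} (x : ℕ) (h : i < c.length) :
    (c.set i x).getD i 0 = x := by
  rw [List.getD_eq_getElem _ _ (by simpa using h)]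
  exact List.getElem_set_self ..

lemma getD_set_ne {c : List ℕ} {i q : ℕ} (x : ℕ) (h : q ≠ i) :
    (c.set i x).getD q 0 = c.getD q 0 := by
  by_cases hq : q < c.length
  · rw [List.getD_eq_getElem _ _ (by simpa using hq), List.getD_eq_getElem _ _ hq]
    exact List.getElem_set_ne (by omega) ..
  · rw [List.getD_eq_default _ _ (by simp; omega), List.getD_eq_default _ _ (by omega)]

lemma getD_reverse {c : List ℕ} {q : ℕ} (h : q < c.length) :
    c.reverse.getD q 0 = c.getD (c.length - 1 - q) 0 := by
  rw [List.getD_eq_getElem _ _ (by simpa using h), List.getD_eq_getElem _ _ (by omega)]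
  exact List.getElem_reverse (by simpa using h)

lemma eq_of_getD {l₁ l₂ : List ℕ} (hlen : l₁.length = l₂.length)
    (h : ∀ q, q < l₁.length → l₁.getD q 0 = l₂.getD q 0) : l₁ = l₂ := by
  refine List.ext_getElem hlen (fun q h1 h2 => ?_)
  have := h q h1
  rwa [List.getD_eq_getElem _ _ h1, List.getD_eq_getElem _ _ h2] at this

/-! ### sums -/

lemma sum_eq_sum_getD (c : List ℕ) : c.sum = ∑ q ∈ Finset.range c.length, c.getD q 0 := by
  induction c with
  | nil => simp
  | cons a l ih =>
    rw [List.sum_cons, List.length_cons, Finset.sum_range_succ', ih]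
    simp [add_comm]

lemma rkL_le (c : List ℕ) : rkL c ≤ (c.length - 1) * c.sum := by
  rw [rkL, sum_eq_sum_getD, Finset.mul_sum]
  refine Finset.sum_le_sum fun q hq => ?_
  exact Nat.mul_le_mul_right _ (by have := Finset.mem_range.1 hq; omega)

lemma sum_update2 {N j : ℕ} (hj : j + 1 < N) (f : ℕ → ℕ) (x y : ℕ) :
    (∑ q ∈ Finset.range N, (if q = j then x else if q = j+1 then y else f q)) + f j + f (j+1)
      = (∑ q ∈ Finset.range N, f q) + x + y := by
  have hjm : j ∈ Finset.range N := Finset.mem_range.2 (by omega)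
  have hj1m : j+1 ∈ (Finset.range N).erase j :=
    Finset.mem_erase.2 ⟨by omega, Finset.mem_range.2 hj⟩
  have key : ∀ g : ℕ → ℕ, ∑ q ∈ Finset.range N, g q
      = ∑ q ∈ ((Finset.range N).erase j).erase (j+1), g q + g (j+1) + g j := by
    intro g
    rw [Finset.sum_erase_add _ _ hj1m, Finset.sum_erase_add _ _ hjm]
  have e1 := key (fun q => if q = j then x else if q = j+1 then y else f q)
  have e2 := key f
  rw [e1, e2]
  have hcong : ∑ q ∈ ((Finset.range N).erase j).erase (j+1),
        (if q = j then x else if q = j+1 then y else f q)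
      = ∑ q ∈ ((Finset.range N).erase j).erase (j+1), f q := by
    refine Finset.sum_congr rfl fun q hq => ?_
    have h1 := (Finset.mem_erase.1 hq).1
    have h2 := (Finset.mem_erase.1 (Finset.mem_erase.1 hq).2).1
    simp [h1, h2]
  rw [hcong]
  have hx : (if j = j then x else if j = j+1 then y else f j) = x := by
    rw [if_pos rfl]
  have hy : (if j+1 = j then x else if j+1 = j+1 then y else f (j+1)) = y := by
    rw [if_neg (by omega), if_pos rfl]
  rw [hx, hy]
  omega

/-! ### the step operation -/

def stp (c : List ℕ) (j : ℕ) : List ℕ :=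
  (c.set j (c.getD j 0 - 1)).set (j+1) (c.getD (j+1) 0 + 1)

lemma length_stp (c : List ℕ) (j : ℕ) : (stp c j).length = c.length := by
  simp [stp]

lemma getD_stp_left {c : List ℕ} {j : ℕ} (h : j < c.length) :
    (stp c j).getD j 0 = c.getD j 0 - 1 := by
  rw [stp, getD_set_ne _ (by omega), getD_set_self _ h]

lemma getD_stp_right {c : List ℕ} {j : ℕ} (h : j + 1 < c.length) :
    (stp c j).getD (j+1) 0 = c.getD (j+1) 0 + 1 := by
  rw [stp, getD_set_self _ (by simpa using h)]

lemma getD_stp_other {c : List ℕ} {j q : ℕ} (h1 : q ≠ j) (h2 : q ≠ j+1) :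
    (stp c j).getD q 0 = c.getD q 0 := by
  rw [stp, getD_set_ne _ h2, getD_set_ne _ h1]

lemma stp_getD_eq {c : List ℕ} {j : ℕ} (h : j + 1 < c.length) :
    ∀ q ∈ Finset.range c.length, (stp c j).getD q 0
      = (if q = j then c.getD j 0 - 1 else if q = j+1 then c.getD (j+1) 0 + 1
          else c.getD q 0) := by
  intro q _
  rcases eq_or_ne q j with rfl | h1
  · rw [if_pos rfl, getD_stp_left (by omega)]
  rcases eq_or_ne q (j+1) with rfl | h2
  · rw [if_neg h1, if_pos rfl, getD_stp_right h]
  · rw [if_neg h1, if_neg h2, getD_stp_other h1 h2]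

lemma sum_stp {c : List ℕ} {j : ℕ} (h : j + 1 < c.length) (hz : c.getD j 0 ≠ 0) :
    (stp c j).sum = c.sum := by
  rw [sum_eq_sum_getD, sum_eq_sum_getD, length_stp,
    Finset.sum_congr rfl (stp_getD_eq h)]
  have := sum_update2 h (fun q => c.getD q 0) (c.getD j 0 - 1) (c.getD (j+1) 0 + 1)
  omega

lemma rkL_stp {c : List ℕ} {j : ℕ} (h : j + 1 < c.length) (hz : c.getD j 0 ≠ 0) :
    rkL (stp c j) = rkL c + 1 := by
  rw [rkL, rkL, length_stp]
  have e : ∀ q ∈ Finset.range c.length, q * (stp c j).getD q 0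
      = (if q = j then j * (c.getD j 0 - 1) else if q = j+1 then (j+1) * (c.getD (j+1) 0 + 1)
          else q * c.getD q 0) := by
    intro q hq
    rw [stp_getD_eq h q hq]
    rcases eq_or_ne q j with rfl | h1
    · rw [if_pos rfl, if_pos rfl]
    rcases eq_or_ne q (j+1) with rfl | h2
    · rw [if_neg h1, if_neg h1, if_pos rfl, if_pos rfl]
    · rw [if_neg h1, if_neg h1, if_neg h2, if_neg h2]
  rw [Finset.sum_congr rfl e]
  have key := sum_update2 h (fun q => q * c.getD q 0)
    (j * (c.getD j 0 - 1)) ((j+1) * (c.getD (j+1) 0 + 1))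
  obtain ⟨d, hd⟩ : ∃ d, c.getD j 0 = d + 1 := ⟨c.getD j 0 - 1, by omega⟩
  simp only [hd, Nat.add_sub_cancel, Nat.mul_succ] at key ⊢
  generalize j * d = A at key
  generalize (j+1) * c.getD (j+1) 0 = B at key
  omega

/-! ### sprL -/

lemma pair_le_sprL {c : List ℕ} {q : ℕ} (h : q + 1 < c.length) :
    c.getD q 0 + c.getD (q+1) 0 ≤ sprL c :=
  Finset.le_sup (f := fun i => c.getD i 0 + c.getD (i+1) 0) (Finset.mem_range.2 (by omega))

lemma sprL_le {c : List ℕ} {s : ℕ}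
    (h : ∀ q, q + 1 < c.length → c.getD q 0 + c.getD (q+1) 0 ≤ s) : sprL c ≤ s :=
  Finset.sup_le fun q hq => h q (by have := Finset.mem_range.1 hq; omega)

lemma sprL_reverse (c : List ℕ) : sprL c.reverse = sprL c := by
  have key : ∀ l : List ℕ, sprL l.reverse ≤ sprL l := by
    intro l
    refine sprL_le fun q hq => ?_
    rw [List.length_reverse] at hq
    rw [getD_reverse (by omega), getD_reverse (by omega)]
    have e : l.length - 1 - q = (l.length - 1 - (q+1)) + 1 := by omega
    rw [e, add_comm]
    exact pair_le_sprL (by omega)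
  refine le_antisymm (key c) ?_
  have := key c.reverse
  rwa [List.reverse_reverse] at this

/-! ### lnormIdx -/

lemma lnorm_spec (c : List ℕ) : ∀ (fuel i : ℕ), c.length ≤ i + fuel →
    i ≤ lnormIdx c fuel i ∧
    (∀ q, i ≤ q → q < lnormIdx c fuel i → q + 2 < c.length ∧ c.getD q 0 = c.getD (q+2) 0) ∧
    ¬(lnormIdx c fuel i + 2 < c.length ∧
        c.getD (lnormIdx c fuel i) 0 = c.getD (lnormIdx c fuel i + 2) 0) := by
  intro fuel
  induction fuel with
  | zero =>
    intro i h
    simp only [lnormIdx]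
    exact ⟨le_rfl, fun q h1 h2 => absurd h2 (by omega), fun h' => by omega⟩
  | succ fuel ih =>
    intro i h
    simp only [lnormIdx]
    by_cases hc : i + 2 < c.length ∧ c.getD i 0 = c.getD (i+2) 0
    · rw [if_pos hc]
      obtain ⟨h1, h2, h3⟩ := ih (i+1) (by omega)
      refine ⟨by omega, fun q hq1 hq2 => ?_, h3⟩
      rcases eq_or_lt_of_le hq1 with rfl | hlt
      · exact hc
      · exact h2 q (by omega) hq2
    · rw [if_neg hc]
      exact ⟨le_rfl, fun q h1 h2 => absurd h2 (by omega), hc⟩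

lemma lnorm_eq (c : List ℕ) : ∀ (fuel i j : ℕ), i ≤ j → j < i + fuel →
    (∀ q, i ≤ q → q < j → q + 2 < c.length ∧ c.getD q 0 = c.getD (q+2) 0) →
    ¬(j + 2 < c.length ∧ c.getD j 0 = c.getD (j+2) 0) →
    lnormIdx c fuel i = j := by
  intro fuel
  induction fuel with
  | zero => intro i j h1 h2 _ _; omega
  | succ fuel ih =>
    intro i j hij hf heq hstop
    simp only [lnormIdx]
    rcases eq_or_lt_of_le hij with rfl | hlt
    · rw [if_neg hstop]
    · rw [if_pos (heq i le_rfl hlt)]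
      exact ih (i+1) j hlt (by omega) (fun q h1 h2 => heq q (by omega) h2) hstop

lemma pair_propagate {c : List ℕ} {s i : ℕ} (hp : c.getD i 0 + c.getD (i+1) 0 = s) :
    ∀ j, i ≤ j → (∀ q, i ≤ q → q < j → c.getD q 0 = c.getD (q+2) 0) →
    c.getD j 0 + c.getD (j+1) 0 = s := by
  intro j
  induction j with
  | zero =>
    intro h _
    obtain rfl := Nat.le_zero.mp h
    exact hp
  | succ j ih =>
    intro hij heq
    rcases eq_or_lt_of_le hij with rfl | hlt
    · exact hp
    · have hres := ih (by omega) (fun q h1 h2 => heq q h1 (by omega))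
      have e := heq j (by omega) (by omega)
      rw [show j + 1 + 1 = j + 2 from by omega]
      omega

/-! ### lowerMove / lowerList -/

lemma lowerMove_eq (c : List ℕ) (i : ℕ) :
    lowerMove c i = if c.getD (lnormIdx c c.length i) 0 = 0 then none
      else some (stp c (lnormIdx c c.length i), lnormIdx c c.length i) := rfl

lemma lowerList_succ (F : ℕ) (c : List ℕ) (i : ℕ) :
    lowerList (F+1) c i = match lowerMove c i with
      | none => [c]
      | some (a', j) => c :: lowerList F a' j := rfl

lemma lowerList_succ_none {F : ℕ} {c : List ℕ} {i : ℕ} (h : lowerMove c i = none) :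
    lowerList (F+1) c i = [c] := by rw [lowerList_succ, h]

lemma lowerList_succ_some {F : ℕ} {c c' : List ℕ} {i j : ℕ}
    (h : lowerMove c i = some (c', j)) :
    lowerList (F+1) c i = c :: lowerList F c' j := by rw [lowerList_succ, h]

lemma lowerList_eq_cons (F : ℕ) (c : List ℕ) (i : ℕ) :
    ∃ t, lowerList F c i = c :: t := by
  cases F with
  | zero => exact ⟨[], rfl⟩
  | succ F =>
    rcases h : lowerMove c i with _ | ⟨c', j⟩
    · exact ⟨[], lowerList_succ_none h⟩
    · exact ⟨_, lowerList_succ_some h⟩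

lemma raiseList_of_initial {c : List ℕ} (h : c.getD 1 0 = 0) (F : ℕ) :
    raiseList F c 0 = [c] := by
  cases F with
  | zero => rfl
  | succ F =>
    have hm : raiseMove c 0 = none := by
      have e : raiseMove c 0 = if c.getD 1 0 = 0 then none
          else some ((c.set 0 (c.getD 0 0 + 1)).set 1 (c.getD 1 0 - 1), 0) := rfl
      rw [e, if_pos h]
    rw [show raiseList (F+1) c 0
        = (match raiseMove c 0 with
            | none => [c]
            | some (a', j) => c :: raiseList F a' j) from rfl, hm]

/-! ### the invariant -/

structure Inv (s : ℕ) (c : List ℕ) (i : ℕ) : Prop where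
  hi : i + 1 < c.length
  hpair : c.getD i 0 + c.getD (i+1) 0 = s
  hspr : sprL c = s
  hleft : i = 0 ∨ c.getD (i-1) 0 < c.getD (i+1) 0

end OHaraAux

namespace OHaraAux
open OHara

theorem main (s : ℕ) (F : ℕ) : ∀ (c : List ℕ) (i : ℕ), Inv s c i →
    (c.length - 1) * c.sum < rkL c + F →
    ∀ b, (lowerList F c i).getLast? = some b →
    b.length = c.length ∧ b.sum = c.sum ∧
    rkL c + ((lowerList F c i).length - 1) = rkL b ∧
    b.getD (c.length - 2) 0 = 0 ∧ b.getD (c.length - 1) 0 = s ∧ sprL b = s ∧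
    ∀ G, (lowerList F c i).length - 1 ≤ G →
      lowerList G b.reverse 0 =
        ((lowerList F c i).map List.reverse).reverse.dropLast ++
          lowerList (G - ((lowerList F c i).length - 1)) c.reverse
            (c.length - 2 - lnormIdx c c.length i) := by
  induction F with
  | zero =>
    intro c i hInv hfuel b hb
    exact absurd (lt_of_lt_of_le (by simpa using hfuel) (rkL_le c)) (lt_irrefl _)
  | succ F ih =>
    intro c i hInv hfuel b hb
    obtain ⟨hi, hpair, hspr, hleft⟩ := hInv
    obtain ⟨hij, heqs, hstop⟩ := lnorm_spec c c.length i (by omega)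
    set j := lnormIdx c c.length i with hjdef
    have hj1 : j + 1 < c.length := by
      rcases eq_or_lt_of_le hij with h | h
      · omega
      · have := (heqs (j-1) (by omega) (by omega)).1; omega
    have hpairj : c.getD j 0 + c.getD (j+1) 0 = s :=
      pair_propagate hpair j hij (fun q h1 h2 => (heqs q h1 h2).2)
    by_cases hz : c.getD j 0 = 0
    · -- halting case
      have hmove : lowerMove c i = none := by
        rw [lowerMove_eq, ← hjdef, if_pos hz]
      rw [lowerList_succ_none hmove] at hb ⊢
      simp only [List.getLast?_singleton, Option.some.injEq] at hb
      subst hb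
      have hjl : j = c.length - 2 := by
        by_contra hne
        have h2 : j + 2 < c.length := by omega
        have hne2 : c.getD j 0 ≠ c.getD (j+2) 0 := fun he => hstop ⟨h2, he⟩
        have hp := pair_le_sprL (c := c) (q := j+1) (by omega)
        rw [hspr, show j + 1 + 1 = j + 2 from by omega] at hp
        omega
      refine ⟨rfl, rfl, by simp, ?_, ?_, hspr, ?_⟩
      · rw [← hjl]; exact hz
      · rw [show c.length - 1 = j + 1 from by omega]; omega
      · intro G hG
        have hix : c.length - 2 - j = 0 := by omega
        simp [hix]
    · -- step case
      have hmove : lowerMove c i = some (stp c j, j) := by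
        rw [lowerMove_eq, ← hjdef, if_neg hz]
      set c' := stp c j with hc'
      rw [lowerList_succ_some hmove] at hb ⊢
      have hlen' : c'.length = c.length := length_stp c j
      have hsum' : c'.sum = c.sum := sum_stp hj1 hz
      have hrk' : rkL c' = rkL c + 1 := rkL_stp hj1 hz
      have hlt2 : ∀ _h2 : j + 2 < c.length, c.getD (j+2) 0 < c.getD j 0 := by
        intro h2
        have hp := pair_le_sprL (c := c) (q := j+1) (by omega)
        rw [hspr, show j + 1 + 1 = j + 2 from by omega] at hp
        have : c.getD j 0 ≠ c.getD (j+2) 0 := fun he => hstop ⟨h2, he⟩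
        omega
      have hgj : c'.getD j 0 = c.getD j 0 - 1 := getD_stp_left (by omega)
      have hgj1 : c'.getD (j+1) 0 = c.getD (j+1) 0 + 1 := getD_stp_right hj1
      have hgo : ∀ q, q ≠ j → q ≠ j+1 → c'.getD q 0 = c.getD q 0 :=
        fun q hx1 hx2 => getD_stp_other hx1 hx2
      have hInv' : Inv s c' j := by
        refine ⟨by omega, by omega, ?_, ?_⟩
        · refine le_antisymm (sprL_le fun q hq => ?_) ?_
          · rw [hlen'] at hq
            rcases eq_or_ne q j with rfl | hq1
            · omega
            rcases eq_or_ne q (j+1) with rfl | hq2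
            · have h2 : j + 2 < c.length := by omega
              have hl := hlt2 h2
              have hrest : c'.getD (j+2) 0 = c.getD (j+2) 0 := hgo _ (by omega) (by omega)
              rw [show j + 1 + 1 = j + 2 from rfl, hrest, hgj1]
              omega
            rcases eq_or_ne (q+1) j with he | hq3
            · have hx1 : c'.getD q 0 = c.getD q 0 := hgo _ (by omega) (by omega)
              have hp := pair_le_sprL (c := c) (q := q) hq
              rw [hspr] at hp
              rw [hx1, he, hgj]
              rw [he] at hp
              omega
            · have hx1 : c'.getD q 0 = c.getD q 0 := hgo _ hq1 hq2
              have hx2 : c'.getD (q+1) 0 = c.getD (q+1) 0 := hgo _ hq3 (by omega)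
              have hp := pair_le_sprL (c := c) (q := q) hq
              rw [hspr] at hp
              omega
          · have hp := pair_le_sprL (c := c') (q := j) (by omega)
            omega
        · rcases Nat.eq_zero_or_pos j with hj0 | hjpos
          · exact Or.inl hj0
          right
          have hL : c'.getD (j-1) 0 = c.getD (j-1) 0 := hgo _ (by omega) (by omega)
          rcases eq_or_lt_of_le hij with he | hlt
          · rw [he] at hleft
            rcases hleft with hlf | hlf
            · omega
            · omega
          · have hE := (heqs (j-1) (by omega) (by omega)).2
            rw [show j - 1 + 2 = j + 1 from by omega] at hE
            omega
      have hfuel' : (c'.length - 1) * c'.sum < rkL c' + F := by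
        rw [hlen', hsum', hrk']
        exact lt_of_lt_of_le hfuel (by omega)
      obtain ⟨t, ht⟩ := lowerList_eq_cons F c' j
      have hb' : (lowerList F c' j).getLast? = some b := by
        rw [ht]
        rw [ht, List.getLast?_cons_cons] at hb
        exact hb
      obtain ⟨ihlen, ihsum, ihrk, iht0, iht1, ihspr, ihtau⟩ := ih c' j hInv' hfuel' b hb'
      have hkpos : 1 ≤ (lowerList F c' j).length := by rw [ht]; simp
      refine ⟨by rw [ihlen, hlen'], by rw [ihsum, hsum'], ?_, ?_, ?_, ihspr, ?_⟩
      · rw [hrk'] at ihrk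
        simp only [List.length_cons]
        omega
      · rw [← hlen']; exact iht0
      · rw [← hlen']; exact iht1
      · intro G hG
        simp only [List.length_cons] at hG
        have hG' : (lowerList F c' j).length - 1 ≤ G := by omega
        have ih2 := ihtau G hG'
        obtain ⟨hjj', heqs', hstop'⟩ := lnorm_spec c' c'.length j (by omega)
        set j' := lnormIdx c' c'.length j with hj'def
        have hj'1 : j' + 1 < c.length := by
          rcases eq_or_lt_of_le hjj' with h | h
          · omega
          · have := (heqs' (j'-1) (by omega) (by omega)).1; omega
        have hrevlen : c'.reverse.length = c.length := by
          rw [List.length_reverse, hlen']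
        have hlnrev : lnormIdx c'.reverse c'.reverse.length (c'.length - 2 - j')
            = c.length - 2 - j := by
          refine lnorm_eq _ _ _ _ (by omega) (by omega) ?_ ?_
          · intro q hq1 hq2
            rw [hlen'] at hq1
            refine ⟨by omega, ?_⟩
            rw [getD_reverse (c := c') (by omega), getD_reverse (c := c') (by omega)]
            rw [show c'.length - 1 - q = (c.length - 3 - q) + 2 from by omega,
              show c'.length - 1 - (q+2) = c.length - 3 - q from by omega]
            exact ((heqs' (c.length - 3 - q) (by omega) (by omega)).2).symm
          · rintro ⟨hh1, hh2⟩
            rw [hrevlen] at hh1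
            have hjpos : 1 ≤ j := by omega
            rw [getD_reverse (c := c') (by omega), getD_reverse (c := c') (by omega),
              show c'.length - 1 - (c.length - 2 - j) = j + 1 from by omega,
              show c'.length - 1 - (c.length - 2 - j + 2) = j - 1 from by omega] at hh2
            rcases hInv'.hleft with h | h
            · omega
            · omega
        have hval : ¬ c'.reverse.getD (c.length - 2 - j) 0 = 0 := by
          rw [getD_reverse (c := c') (by omega),
            show c'.length - 1 - (c.length - 2 - j) = j + 1 from by omega, hgj1]
          omega
        have hstep2 : stp c'.reverse (c.length - 2 - j) = c.reverse := by
          apply eq_of_getD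
          · rw [length_stp, hrevlen, List.length_reverse]
          · intro q hq
            rw [length_stp, hrevlen] at hq
            have hrq : c.reverse.getD q 0 = c.getD (c.length - 1 - q) 0 :=
              getD_reverse (by omega)
            rcases eq_or_ne q (c.length - 2 - j) with rfl | hx1
            · rw [getD_stp_left (by omega), hrq,
                getD_reverse (c := c') (by omega),
                show c'.length - 1 - (c.length - 2 - j) = j + 1 from by omega, hgj1,
                show c.length - 1 - (c.length - 2 - j) = j + 1 from by omega]
              omega
            rcases eq_or_ne q (c.length - 1 - j) with rfl | hx2
            · rw [hrq, show c.length - 1 - j = (c.length - 2 - j) + 1 from by omega,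
                getD_stp_right (by omega),
                getD_reverse (c := c') (by omega),
                show c'.length - 1 - (c.length - 2 - j + 1) = j from by omega, hgj,
                show c.length - 1 - (c.length - 2 - j + 1) = j from by omega]
              omega
            · rw [getD_stp_other hx1 (by omega), hrq,
                getD_reverse (c := c') (by omega),
                show c'.length - 1 - q = c.length - 1 - q from by omega]
              exact hgo _ (by omega) (by omega)
        have hmove2 : lowerMove c'.reverse (c'.length - 2 - j')
            = some (c.reverse, c.length - 2 - j) := by
          rw [lowerMove_eq, hlnrev, if_neg hval, hstep2]
        obtain ⟨H, hH⟩ : ∃ H, G - ((lowerList F c' j).length - 1) = H + 1 :=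
          ⟨G - (lowerList F c' j).length, by omega⟩
        rw [hH, lowerList_succ_some hmove2] at ih2
        rw [ih2, ht]
        have eH : G - ((c :: c' :: t).length - 1) = H := by
          rw [ht] at hH
          simp only [List.length_cons] at hH ⊢
          omega
        rw [eH]
        simp only [List.map_cons, List.reverse_cons, List.dropLast_concat]
        simp [List.append_assoc]

end OHaraAux

open OHara in
/-- If `𝔞` is initial and `𝔟` is the terminal element of `T_0(𝔞)`, then `τ𝔟` is initial
and `τ(T_0(𝔞)) = T_0(τ𝔟)` as subsets of `A_n(m)`. -/
theorem tau_of_transversal_chain (n m : ℕ) (hn : 1 ≤ n) (hm : 1 ≤ m)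
    (a : List ℕ) (hlen : a.length = n + 1) (hsum : a.sum = m)
    (h1 : a.getD 1 0 = 0) (h0 : a.getD 0 0 = sprL a)
    (b : List ℕ) (hb : (lowerList (a.length * a.sum) a 0).getLast? = some b) :
    (b.reverse.getD 1 0 = 0 ∧ b.reverse.getD 0 0 = sprL b.reverse) ∧
    (fun l : List ℕ => l.reverse) '' Tset a 0 = Tset b.reverse 0 := by
  
  have hInv : OHaraAux.Inv (sprL a) a 0 := by
    refine ⟨by omega, by rw [show (0:ℕ)+1 = 1 from rfl, h1, add_zero, h0], rfl, Or.inl rfl⟩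
  have emul : (n+1) * m = n * m + m := by ring
  have hfuel : (a.length - 1) * a.sum < rkL a + a.length * a.sum := by
    rw [hlen, hsum]
    simp only [Nat.add_sub_cancel]
    rw [emul]
    generalize n * m = K
    omega
  obtain ⟨ihlen, ihsum, ihrk, iht0, iht1, ihspr, ihtau⟩ :=
    OHaraAux.main (sprL a) (a.length * a.sum) a 0 hInv hfuel b hb
  set L := lowerList (a.length * a.sum) a 0 with hL
  set k := L.length - 1 with hk
  have hble := OHaraAux.rkL_le b
  rw [ihlen, ihsum, hlen, hsum] at hble
  simp only [Nat.add_sub_cancel] at hble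
  have hG0 : b.reverse.length * b.reverse.sum = a.length * a.sum := by
    rw [List.length_reverse, List.sum_reverse, ihlen, ihsum]
  have hkG : k ≤ b.reverse.length * b.reverse.sum := by
    rw [hG0, hlen, hsum, emul]
    generalize n * m = K at hble ⊢
    omega
  have ih2 := ihtau _ hkG
  obtain ⟨hij0, heqs0, hstop0⟩ := OHaraAux.lnorm_spec a a.length 0 (by omega)
  set j0 := lnormIdx a a.length 0 with hj0
  have hj01 : j0 + 1 < a.length := by
    rcases eq_or_lt_of_le hij0 with h | h
    · omega
    · have := (heqs0 (j0-1) (by omega) (by omega)).1; omega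
  have hterm : ∀ K, lowerList K a.reverse (a.length - 2 - j0) = [a.reverse] := by
    intro K
    cases K with
    | zero => rfl
    | succ K =>
      have hln : lnormIdx a.reverse a.reverse.length (a.length - 2 - j0)
          = a.length - 2 := by
        refine OHaraAux.lnorm_eq _ _ _ _ (by omega)
          (by rw [List.length_reverse]; omega) ?_ ?_
        · intro q hq1 hq2
          refine ⟨by rw [List.length_reverse]; omega, ?_⟩
          rw [OHaraAux.getD_reverse (c := a) (by omega),
            OHaraAux.getD_reverse (c := a) (by omega),
            show a.length - 1 - q = (a.length - 3 - q) + 2 from by omega,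
            show a.length - 1 - (q+2) = a.length - 3 - q from by omega]
          exact ((heqs0 (a.length - 3 - q) (by omega) (by omega)).2).symm
        · rintro ⟨hh1, hh2⟩
          rw [List.length_reverse] at hh1
          omega
      have hv : a.reverse.getD (a.length - 2) 0 = 0 := by
        rw [OHaraAux.getD_reverse (c := a) (by omega),
          show a.length - 1 - (a.length - 2) = 1 from by omega]
        exact h1
      have hmv : lowerMove a.reverse (a.length - 2 - j0) = none := by
        rw [OHaraAux.lowerMove_eq, hln, if_pos hv]
      exact OHaraAux.lowerList_succ_none hmv
  obtain ⟨t, ht⟩ := OHaraAux.lowerList_eq_cons (a.length * a.sum) a 0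
  rw [← hL] at ht
  have chainrev : lowerList (b.reverse.length * b.reverse.sum) b.reverse 0
      = (L.map List.reverse).reverse := by
    rw [ih2, hterm, ht]
    simp only [List.map_cons, List.reverse_cons]
    rw [List.dropLast_concat]
  have hlenb : b.length = n + 1 := by rw [ihlen, hlen]
  have hrev1 : b.reverse.getD 1 0 = 0 := by
    rw [OHaraAux.getD_reverse (c := b) (by omega),
      show b.length - 1 - 1 = a.length - 2 from by omega]
    exact iht0
  have hrev0 : b.reverse.getD 0 0 = sprL b.reverse := by
    rw [OHaraAux.getD_reverse (c := b) (by omega), OHaraAux.sprL_reverse,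
      show b.length - 1 - 0 = a.length - 1 from by omega, iht1, ihspr]
  refine ⟨⟨hrev1, hrev0⟩, ?_⟩
  have hamem : a ∈ L := by rw [ht]; exact List.mem_cons_self
  have hbmem : b ∈ L := List.mem_of_getLast? hb
  have hraise : raiseList (rkL a) a 0 = [a] := OHaraAux.raiseList_of_initial h1 _
  have hraise2 : raiseList (rkL b.reverse) b.reverse 0 = [b.reverse] :=
    OHaraAux.raiseList_of_initial hrev1 _
  ext x
  simp only [Tset, Set.mem_image, Set.mem_setOf_eq, hraise, hraise2, chainrev, ← hL,
    List.mem_singleton, List.mem_reverse, List.mem_map]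
  constructor
  · rintro ⟨y, (hy | hy), rfl⟩
    · exact Or.inr ⟨y, by rw [hy]; exact hamem, rfl⟩
    · exact Or.inr ⟨y, hy, rfl⟩
  · rintro (rfl | ⟨y, hy, rfl⟩)
    · exact ⟨b, Or.inr hbmem, rfl⟩
    · exact ⟨y, Or.inr hy, rfl⟩
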